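/- arXiv:2304.00872 — 4 statements merged into one kernel-verified Lean document; each statement's English description precedes it below -/
import Mathlib

section
/- If the minimal pairwise velocity inner product A(v)(0) := min_{i,j} ⟨v_i(0), v_j(0)⟩ is strictly positive, then A(v)(t) := min_{i,j} ⟨v_i(t), v_j(t)⟩ is monotone increasing on the interval of existence; in particular A(v)(t) ≥ A(v)(0) > 0 for all t. -/
open scoped RealInnerProductSpace
open Set Filter Topology

namespace VelocityAngleAux

variable {ι : Type*} [Fintype ι] [Nonempty ι]

noncomputable def A (f : ι → ℝ → ℝ) (t : ℝ) : ℝ :=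
  Finset.univ.inf' Finset.univ_nonempty (fun q => f q t)

lemma A_le (f : ι → ℝ → ℝ) (t : ℝ) (p : ι) : A f t ≤ f p t :=
  Finset.inf'_le _ (Finset.mem_univ p)

lemma freq_slope (f : ι → ℝ → ℝ) (d : ι → ℝ) (x : ℝ)
    (hder : ∀ p, HasDerivAt (f p) (d p) x) (r : ℝ)
    (hr : ∀ p, f p x = A f x → -(d p) < r) :
    ∀ᶠ z in 𝓝[>] x, slope (fun t => -(A f t)) x z < r := by
  classical
  set E : Finset ι := Finset.univ.filter (fun p => f p x = A f x) with hE
  have hEmem : ∀ p, p ∈ E ↔ f p x = A f x := by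
    intro p; simp [hE]
  have hEne : E.Nonempty := by
    obtain ⟨p, _, hpe⟩ := Finset.exists_mem_eq_inf' (Finset.univ_nonempty (α := ι))
      (fun q => f q x)
    exact ⟨p, (hEmem p).2 hpe.symm⟩
  have hcont : ∀ p, ContinuousAt (f p) x := fun p => (hder p).continuousAt
  set g : ℝ → ℝ := fun z => E.inf' hEne (fun q => f q z) with hg
  have hgx : g x = A f x := by
    refine le_antisymm ?_ (Finset.le_inf' _ _ fun q _ => A_le f x q)
    obtain ⟨q, hq⟩ := hEne
    exact (Finset.inf'_le _ hq).trans_eq ((hEmem q).1 hq)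
  have hgcont : ContinuousAt g x :=
    ContinuousAt.finset_inf'_apply hEne (fun p _ => hcont p)
  have h1 : ∀ᶠ z in 𝓝 x, ∀ p, p ∉ E → g z < f p z := by
    rw [eventually_all]
    intro p
    by_cases hp : p ∈ E
    · exact Eventually.of_forall fun z h => absurd hp h
    · have hlt : g x < f p x := by
        rw [hgx]
        exact lt_of_le_of_ne (A_le f x p) (Ne.symm ((hEmem p).not.1 hp))
      have := ((hcont p).sub hgcont).eventually (eventually_gt_nhds (sub_pos.2 hlt))
      exact this.mono fun z hz _ => sub_pos.1 hz
  have h2 : ∀ᶠ z in 𝓝[>] x, ∀ q ∈ E, slope (fun t => -(f q t)) x z < r := by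
    rw [eventually_all_finset]
    intro q hq
    have hdq : HasDerivAt (fun t => -(f q t)) (-(d q)) x := (hder q).neg
    have htend := hasDerivAt_iff_tendsto_slope.1 hdq
    have := htend.eventually (eventually_lt_nhds (hr q ((hEmem q).1 hq)))
    exact this.filter_mono (nhdsWithin_mono x fun z hz => ne_of_gt hz)
  filter_upwards [h1.filter_mono nhdsWithin_le_nhds, h2, self_mem_nhdsWithin]
    with z hz1 hz2 hz3
  obtain ⟨q, hqE, hqe⟩ := Finset.exists_mem_eq_inf' hEne (fun q => f q z)
  have hAz : g z ≤ A f z := by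
    refine Finset.le_inf' _ _ fun p _ => ?_
    by_cases hp : p ∈ E
    · exact Finset.inf'_le _ hp
    · exact (hz1 p hp).le
  have hnum : -(A f z) - -(A f x) ≤ -(f q z) - -(f q x) := by
    have h1' : f q x = A f x := (hEmem q).1 hqE
    have h2' : f q z = g z := hqe.symm
    have := hAz
    simp only [h1', h2']
    linarith
  have hzx : (0:ℝ) < z - x := sub_pos.2 hz3
  have hs2 := hz2 q hqE
  simp only [slope_def_field] at hs2 ⊢
  exact lt_of_le_of_lt (div_le_div_of_nonneg_right hnum hzx.le) hs2

lemma min_lower_bound (f d : ι → ℝ → ℝ) {a b : ℝ}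
    (hder : ∀ p, ∀ t ∈ Icc a b, HasDerivAt (f p) (d p t) t)
    (hpos : ∀ t ∈ Ico a b, 0 < A f t → ∀ p, f p t = A f t → 0 ≤ d p t)
    (hA0 : 0 < A f a) : ∀ t ∈ Icc a b, A f a ≤ A f t := by
  classical
  set c : ℝ := A f a with hc
  have hcontA : ContinuousOn (fun t => -(A f t)) (Icc a b) := fun t ht =>
    (ContinuousAt.neg (ContinuousAt.finset_inf'_apply Finset.univ_nonempty
      (fun p _ => (hder p t ht).continuousAt))).continuousWithinAt
  have key : ∀ ε : ℝ, 0 < ε → ε * (b - a) < c →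
      ∀ t ∈ Icc a b, -(A f t) ≤ -c + ε * (t - a) := by
    intro ε hε hεc
    set F' : ℝ → ℝ := fun t => if 0 < A f t then 0
      else Finset.univ.sup' Finset.univ_nonempty (fun p => -(d p t)) with hF'def
    have hf' : ∀ y ∈ Ico a b, ∀ r, F' y < r →
        ∃ᶠ z in 𝓝[>] y, slope (fun t => -(A f t)) y z < r := by
      intro y hy r hr
      have hdy : ∀ p, HasDerivAt (f p) (d p y) y := fun p =>
        hder p y (Ico_subset_Icc_self hy)
      by_cases h0 : 0 < A f y
      · rw [hF'def] at hr; simp only [if_pos h0] at hr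
        refine (freq_slope f (fun p => d p y) y hdy r fun p hp => ?_).frequently
        have := hpos y hy h0 p hp
        linarith
      · rw [hF'def] at hr; simp only [if_neg h0] at hr
        refine (freq_slope f (fun p => d p y) y hdy r fun p _ => ?_).frequently
        exact lt_of_le_of_lt (Finset.le_sup' (fun p => -(d p y)) (Finset.mem_univ p)) hr
    have hB : ContinuousOn (fun t : ℝ => -c + ε * (t - a)) (Icc a b) := by
      fun_prop
    have hB' : ∀ y ∈ Ico a b,
        HasDerivWithinAt (fun t : ℝ => -c + ε * (t - a)) ε (Ici y) y := by
      intro y _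
      have : HasDerivAt (fun t : ℝ => -c + ε * (t - a)) ε y := by
        simpa using (((hasDerivAt_id y).sub_const a).const_mul ε).const_add (-c)
      exact this.hasDerivWithinAt
    have hbound : ∀ y ∈ Ico a b, -(A f y) = -c + ε * (y - a) → F' y < ε := by
      intro y hy hcontact
      have hAy : A f y = c - ε * (y - a) := by linarith
      have h1 : ε * (y - a) ≤ ε * (b - a) :=
        mul_le_mul_of_nonneg_left (by linarith [hy.2.le]) hε.le
      have h0 : 0 < A f y := by rw [hAy]; linarith
      rw [hF'def]; simp only [if_pos h0]; exact hε
    exact fun t ht =>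
      image_le_of_liminf_slope_right_lt_deriv_boundary' hcontA hf'
        (by simp [hc]) hB hB' hbound ht
  intro t ht
  by_contra hlt
  push_neg at hlt
  have hba : (0:ℝ) < b - a + 1 := by
    have := ht.1.trans ht.2; linarith
  set ε : ℝ := min (c / (2 * (b - a + 1))) ((c - A f t) / (2 * (b - a + 1))) with hεdef
  have hε : 0 < ε := lt_min (by positivity) (div_pos (by linarith) (by linarith))
  have e1 : ε ≤ c / (2 * (b - a + 1)) := min_le_left _ _
  have e2 : ε ≤ (c - A f t) / (2 * (b - a + 1)) := min_le_right _ _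
  have e3 : ε * (b - a + 1) ≤ c / 2 := by
    calc ε * (b - a + 1) ≤ (c / (2 * (b - a + 1))) * (b - a + 1) :=
          mul_le_mul_of_nonneg_right e1 hba.le
      _ = c / 2 := by field_simp
  have e4 : ε * (b - a + 1) ≤ (c - A f t) / 2 := by
    calc ε * (b - a + 1) ≤ ((c - A f t) / (2 * (b - a + 1))) * (b - a + 1) :=
          mul_le_mul_of_nonneg_right e2 hba.le
      _ = (c - A f t) / 2 := by field_simp
  have hεc : ε * (b - a) < c := by nlinarith
  have hkey := key ε hε hεc t ht
  have h5 : ε * (t - a) ≤ ε * (b - a + 1) :=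
    mul_le_mul_of_nonneg_left (by linarith [ht.2]) hε.le
  nlinarith

end VelocityAngleAux

/-- Monotonicity of the minimal pairwise velocity inner product
`A(v)(t) = min_{i,j} ⟪vᵢ(t), vⱼ(t)⟫` for the unit-speed thermodynamic Cucker-Smale system. -/
theorem velocity_angle_monotone {d : ℕ} {ι : Type*} [Fintype ι] [Nonempty ι]
    (κ₁ τ : ℝ) (hκ₁ : 0 < κ₁) (hτ : 0 < τ)
    (φ : ℝ → ℝ) (hφ : ∀ r, 0 ≤ φ r)
    (x v : ι → ℝ → EuclideanSpace ℝ (Fin d))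
    (T : ι → ℝ → ℝ) (hT : ∀ j t, t ∈ Set.Ico 0 τ → 0 < T j t)
    (hunit : ∀ i t, t ∈ Set.Ico 0 τ → ‖v i t‖ = 1)
    (hode : ∀ i t, t ∈ Set.Ico 0 τ → HasDerivAt (v i)
      ((κ₁ / (Fintype.card ι : ℝ)) •
        ∑ j, (φ ‖x i t - x j t‖ / T j t) • (v j t - ⟪v j t, v i t⟫ • v i t)) t)
    (hA0 : 0 < Finset.univ.inf' Finset.univ_nonempty
      (fun p : ι × ι => ⟪v p.1 0, v p.2 0⟫)) :
    MonotoneOn (fun t => Finset.univ.inf' Finset.univ_nonempty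
        (fun p : ι × ι => ⟪v p.1 t, v p.2 t⟫)) (Set.Ico 0 τ) ∧
    ∀ t ∈ Set.Ico (0:ℝ) τ,
      0 < Finset.univ.inf' Finset.univ_nonempty (fun p : ι × ι => ⟪v p.1 0, v p.2 0⟫) ∧
      Finset.univ.inf' Finset.univ_nonempty (fun p : ι × ι => ⟪v p.1 0, v p.2 0⟫) ≤
        Finset.univ.inf' Finset.univ_nonempty (fun p : ι × ι => ⟪v p.1 t, v p.2 t⟫) := by
  classical
  set w : ι → ℝ → EuclideanSpace ℝ (Fin d) := fun i t =>
    (κ₁ / (Fintype.card ι : ℝ)) •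
      ∑ j, (φ ‖x i t - x j t‖ / T j t) • (v j t - ⟪v j t, v i t⟫ • v i t) with hw
  set F : ι × ι → ℝ → ℝ := fun p t => ⟪v p.1 t, v p.2 t⟫ with hF
  set D : ι × ι → ℝ → ℝ := fun p t => ⟪v p.1 t, w p.2 t⟫ + ⟪w p.1 t, v p.2 t⟫ with hD
  have hAeq : ∀ t, VelocityAngleAux.A F t =
      Finset.univ.inf' Finset.univ_nonempty (fun p : ι × ι => ⟪v p.1 t, v p.2 t⟫) :=
    fun t => rfl
  have hder : ∀ (p : ι × ι), ∀ t ∈ Set.Ico 0 τ, HasDerivAt (F p) (D p t) t := by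
    intro p t ht
    exact (hode p.1 t ht).inner ℝ (hode p.2 t ht)
  have hpos : ∀ t ∈ Set.Ico 0 τ, 0 < VelocityAngleAux.A F t →
      ∀ p, F p t = VelocityAngleAux.A F t → 0 ≤ D p t := by
    intro t ht hApos p hp
    set At := VelocityAngleAux.A F t with hAt
    have hmin : ∀ k l : ι, At ≤ ⟪v k t, v l t⟫ := fun k l => VelocityAngleAux.A_le F t (k, l)
    have hone : ∀ k l : ι, ⟪v k t, v l t⟫ ≤ 1 := by
      intro k l
      have h := real_inner_le_norm (v k t) (v l t)
      rwa [hunit k t ht, hunit l t ht, one_mul] at h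
    have hAe : ⟪v p.1 t, v p.2 t⟫ = At := hp
    have hcoef : ∀ i k : ι, 0 ≤ φ ‖x i t - x k t‖ / T k t := fun i k =>
      div_nonneg (hφ _) (hT k t ht).le
    have hκN : 0 ≤ κ₁ / (Fintype.card ι : ℝ) := div_nonneg hκ₁.le (Nat.cast_nonneg _)
    have hterm2 : 0 ≤ ⟪w p.1 t, v p.2 t⟫ := by
      rw [hw]
      rw [real_inner_smul_left]
      refine mul_nonneg hκN ?_
      rw [sum_inner]
      refine Finset.sum_nonneg fun k _ => ?_
      rw [real_inner_smul_left]
      refine mul_nonneg (hcoef _ _) ?_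
      rw [inner_sub_left, real_inner_smul_left]
      have h1 : ⟪v k t, v p.1 t⟫ * ⟪v p.1 t, v p.2 t⟫ ≤ ⟪v k t, v p.2 t⟫ := by
        rw [hAe]
        calc ⟪v k t, v p.1 t⟫ * At ≤ 1 * At :=
              mul_le_mul_of_nonneg_right (hone _ _) hApos.le
          _ = At := one_mul _
          _ ≤ ⟪v k t, v p.2 t⟫ := hmin _ _
      linarith
    have hterm1 : 0 ≤ ⟪v p.1 t, w p.2 t⟫ := by
      rw [hw]
      rw [real_inner_smul_right]
      refine mul_nonneg hκN ?_
      rw [inner_sum]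
      refine Finset.sum_nonneg fun k _ => ?_
      rw [real_inner_smul_right]
      refine mul_nonneg (hcoef _ _) ?_
      rw [inner_sub_right, real_inner_smul_right]
      have h1 : ⟪v k t, v p.2 t⟫ * ⟪v p.1 t, v p.2 t⟫ ≤ ⟪v p.1 t, v k t⟫ := by
        rw [hAe]
        calc ⟪v k t, v p.2 t⟫ * At ≤ 1 * At :=
              mul_le_mul_of_nonneg_right (hone _ _) hApos.le
          _ = At := one_mul _
          _ ≤ ⟪v p.1 t, v k t⟫ := hmin _ _
      linarith
    exact add_nonneg hterm1 hterm2
  have hA0' : 0 < VelocityAngleAux.A F 0 := hA0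
  have P2 : ∀ t ∈ Set.Ico (0:ℝ) τ, VelocityAngleAux.A F 0 ≤ VelocityAngleAux.A F t := by
    intro t ht
    have hsub : Set.Icc (0:ℝ) t ⊆ Set.Ico 0 τ := fun u hu =>
      ⟨hu.1, lt_of_le_of_lt hu.2 ht.2⟩
    exact VelocityAngleAux.min_lower_bound F D
      (fun p u hu => hder p u (hsub hu))
      (fun u hu hAu => hpos u (hsub (Set.Ico_subset_Icc_self hu)) hAu)
      hA0' t ⟨ht.1, le_rfl⟩
  constructor
  · intro s hs t ht hst
    have hsub : Set.Icc s t ⊆ Set.Ico 0 τ := fun u hu =>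
      ⟨hs.1.trans hu.1, lt_of_le_of_lt hu.2 ht.2⟩
    have hApos : 0 < VelocityAngleAux.A F s := lt_of_lt_of_le hA0' (P2 s hs)
    exact VelocityAngleAux.min_lower_bound F D
      (fun p u hu => hder p u (hsub hu))
      (fun u hu hAu => hpos u (hsub (Set.Ico_subset_Icc_self hu)) hAu)
      hApos t ⟨hst, le_rfl⟩
  · exact fun t ht => ⟨hA0, P2 t ht⟩
end

section
/- Suppose D_X, D_V: [0,∞) → ℝ₊ are Lipschitz with |D_X'| ≤ D_V and D_V' ≤ −c φ(D_X) D_V a.e., where c > 0 and φ is nonincreasing and positive. If there exists D_X^∞ > 0 with D_X(0) + D_V(0)/(c φ(D_X^∞)) < D_X^∞, then D_X(t) < D_X^∞ for all t ≥ 0 and D_V(t) ≤ D_V(0) exp(−c φ(D_X^∞) t). -/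
open MeasureTheory

section FlockAux
open Set Filter Topology

lemma lip_ftc_le {g φf : ℝ → ℝ} {K : NNReal} {a b : ℝ} (hab : a ≤ b)
    (hg : LipschitzOnWith K g (Set.Icc a (b+1)))
    (hφ : ContinuousOn φf (Set.Icc a b))
    (hle : ∀ᵐ x ∂(volume.restrict (Set.Ioo a b)), deriv g x ≤ φf x) :
    g b - g a ≤ ∫ x in Set.Ioo a b, φf x := by
  rcases eq_or_lt_of_le hab with rfl | hab'
  · simp
  have hgc : ContinuousOn g (Icc a (b+1)) := hg.continuousOn
  -- the difference quotients
  set F : ℕ → ℝ → ℝ := fun n x => (g (x + 1/(n+1)) - g x) * (n+1) with hF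
  have hmem : ∀ n : ℕ, ∀ x ∈ Icc a b, x + 1/(n+1:ℝ) ∈ Icc a (b+1) := by
    intro n x hx
    have h1 : (0:ℝ) < 1/(n+1:ℝ) := by positivity
    have h2 : 1/(n+1:ℝ) ≤ 1 := by
      rw [div_le_one (by positivity)]; linarith [Nat.cast_nonneg (α := ℝ) n]
    obtain ⟨h3, h4⟩ := hx
    constructor <;> nlinarith
  -- bound on quotients
  have hbnd : ∀ n : ℕ, ∀ x ∈ Icc a b, |F n x| ≤ K := by
    intro n x hx
    have h1 : (0:ℝ) < 1/(n+1:ℝ) := by positivity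
    have := hg.dist_le_mul _ (hmem n x hx) _ (Icc_subset_Icc le_rfl (by linarith) hx)
    rw [Real.dist_eq, Real.dist_eq] at this
    have hxx : |x + 1/(n+1:ℝ) - x| = 1/(n+1:ℝ) := by
      rw [add_sub_cancel_left, abs_of_pos h1]
    rw [hxx] at this
    calc |F n x| = |g (x + 1/(n+1)) - g x| * (n+1) := by
          rw [hF]; simp [abs_mul, abs_of_pos (show (0:ℝ) < (n:ℝ)+1 by positivity)]
      _ ≤ (K * (1/(n+1:ℝ))) * (n+1) := by
          apply mul_le_mul_of_nonneg_right this (by positivity)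
      _ = K := by field_simp
  -- a.e. differentiability and convergence of quotients
  have hdiff : ∀ᵐ x ∂(volume.restrict (Set.Ioo a b)), DifferentiableAt ℝ g x := by
    have h1 := hg.ae_differentiableWithinAt_of_mem_real
    have h2 : ∀ᵐ x ∂(volume.restrict (Set.Ioo a b)), x ∈ Ioo a b := ae_restrict_mem measurableSet_Ioo
    filter_upwards [ae_restrict_of_ae h1, h2] with x hx hx2
    have hxm : x ∈ Icc a (b+1) := ⟨hx2.1.le, by linarith [hx2.2]⟩
    have := hx hxm
    apply this.differentiableAt
    exact Icc_mem_nhds (by linarith [hx2.1]) (by linarith [hx2.2])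
  have htend : ∀ᵐ x ∂(volume.restrict (Set.Ioo a b)),
      Tendsto (fun n => F n x) atTop (𝓝 (deriv g x)) := by
    filter_upwards [hdiff] with x hx
    have hd := hx.hasDerivAt
    rw [hasDerivAt_iff_tendsto_slope] at hd
    have hseq : Tendsto (fun n : ℕ => x + 1/(n+1:ℝ)) atTop (𝓝[≠] x) := by
      apply tendsto_nhdsWithin_of_tendsto_nhds_of_eventually_within
      · have : Tendsto (fun n : ℕ => 1/(n+1:ℝ)) atTop (𝓝 0) := by
          exact tendsto_one_div_add_atTop_nhds_zero_nat
        simpa using tendsto_const_nhds.add this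
      · filter_upwards with n
        simp only [mem_compl_iff, mem_singleton_iff]
        have : (0:ℝ) < 1/(n+1:ℝ) := by positivity
        intro h; nlinarith [congrArg (· - x) h]
    have := hd.comp hseq
    convert this using 2 with n
    rw [hF]
    simp only [slope_def_field, Function.comp]
    have hne : (n:ℝ) + 1 ≠ 0 := by positivity
    have hxe : x + 1/(n+1:ℝ) - x = 1/(n+1:ℝ) := by ring
    rw [hxe]
    field_simp
  -- measurability of the quotients
  have hgc' : ContinuousOn g (Icc a b) := hgc.mono (Icc_subset_Icc le_rfl (by linarith))
  have hFc : ∀ n : ℕ, ContinuousOn (F n) (Icc a b) := by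
    intro n
    apply ContinuousOn.mul _ continuousOn_const
    apply ContinuousOn.sub _ hgc'
    exact hgc.comp (by fun_prop) (hmem n)
  have hFm : ∀ n : ℕ, AEStronglyMeasurable (F n) (volume.restrict (Ioo a b)) := by
    intro n
    exact ((hFc n).mono Ioo_subset_Icc_self).aestronglyMeasurable measurableSet_Ioo
  -- dominated convergence
  have hDCT : Tendsto (fun n => ∫ x in Ioo a b, F n x) atTop
      (𝓝 (∫ x in Ioo a b, deriv g x)) := by
    apply tendsto_integral_of_dominated_convergence (fun _ => (K:ℝ)) hFm
    · exact integrable_const _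
    · intro n
      filter_upwards [ae_restrict_mem measurableSet_Ioo] with x hx
      exact (hbnd n x (Ioo_subset_Icc_self hx))
    · exact htend
  -- average convergence at a point
  have havg : ∀ p ∈ Icc a b, Tendsto (fun n : ℕ => ((n:ℝ)+1) * ∫ x in p..(p+1/(n+1)), g x)
      atTop (𝓝 (g p)) := by
    intro p hp
    have key : ∀ n : ℕ, dist (((n:ℝ)+1) * ∫ x in p..(p+1/(n+1)), g x) (g p) ≤ (K:ℝ) * (1/(n+1)) := by
      intro n
      have h1 : (0:ℝ) < 1/(n+1:ℝ) := by positivity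
      have hsub : Icc p (p + 1/(n+1:ℝ)) ⊆ Icc a (b+1) := by
        apply Icc_subset_Icc hp.1
        have := (hmem n p hp).2; linarith
      have hint : IntervalIntegrable g volume p (p + 1/(n+1)) := by
        apply ContinuousOn.intervalIntegrable
        rw [uIcc_of_le (by linarith)]
        exact hgc.mono hsub
      have hc : IntervalIntegrable (fun _ => g p) volume p (p + 1/(n+1)) :=
        intervalIntegrable_const
      have hnorm : ‖∫ x in p..(p+1/(n+1:ℝ)), (g x - g p)‖ ≤ (K * (1/(n+1))) * |p + 1/(n+1) - p| := by
        apply intervalIntegral.norm_integral_le_of_norm_le_const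
        intro x hx
        rw [uIoc_of_le (by linarith)] at hx
        have hx1 : x ∈ Icc a (b+1) := hsub ⟨hx.1.le, hx.2⟩
        have hp1 : p ∈ Icc a (b+1) := hsub ⟨le_rfl, by linarith⟩
        have := hg.dist_le_mul x hx1 p hp1
        rw [Real.dist_eq, Real.dist_eq] at this
        have hax : |x - p| ≤ 1/(n+1:ℝ) := by
          rw [abs_of_pos (by linarith [hx.1] : (0:ℝ) < x - p)]
          linarith [hx.2]
        calc ‖g x - g p‖ = |g x - g p| := rfl
          _ ≤ K * |x - p| := this
          _ ≤ K * (1/(n+1)) := by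
              exact mul_le_mul_of_nonneg_left hax K.coe_nonneg
      have heq : ∫ x in p..(p+1/(n+1:ℝ)), (g x - g p) =
          (∫ x in p..(p+1/(n+1:ℝ)), g x) - (1/(n+1:ℝ)) * g p := by
        rw [intervalIntegral.integral_sub hint hc, intervalIntegral.integral_const]
        simp [smul_eq_mul]
      rw [Real.dist_eq]
      have habs : |p + 1/(n+1:ℝ) - p| = 1/(n+1:ℝ) := by
        rw [add_sub_cancel_left, abs_of_pos h1]
      rw [habs] at hnorm
      have hne : ((n:ℝ)+1) ≠ 0 := by positivity
      have : ((n:ℝ)+1) * (∫ x in p..(p+1/(n+1:ℝ)), g x) - g p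
          = ((n:ℝ)+1) * ∫ x in p..(p+1/(n+1:ℝ)), (g x - g p) := by
        rw [heq]; field_simp
      rw [this, abs_mul, abs_of_pos (by positivity : (0:ℝ) < (n:ℝ)+1)]
      calc ((n:ℝ)+1) * |∫ x in p..(p+1/(n+1:ℝ)), (g x - g p)|
          ≤ ((n:ℝ)+1) * ((K * (1/(n+1))) * (1/(n+1))) := by
            exact mul_le_mul_of_nonneg_left hnorm (by positivity)
        _ = (K:ℝ) * (1/(n+1)) := by field_simp
    have hKto : Tendsto (fun n : ℕ => (K:ℝ) * (1/(n+1:ℝ))) atTop (𝓝 0) := by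
      have : Tendsto (fun n : ℕ => 1/(n+1:ℝ)) atTop (𝓝 0) := by
        exact tendsto_one_div_add_atTop_nhds_zero_nat
      simpa using tendsto_const_nhds.mul this
    rw [tendsto_iff_dist_tendsto_zero]
    apply squeeze_zero (fun n => dist_nonneg) key hKto
  -- the integral identity
  have hid : ∀ n : ℕ, ∫ x in Ioo a b, F n x =
      (((n:ℝ)+1) * ∫ x in b..(b+1/(n+1)), g x) - (((n:ℝ)+1) * ∫ x in a..(a+1/(n+1)), g x) := by
    intro n
    have h1 : (0:ℝ) < 1/(n+1:ℝ) := by positivity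
    have hint : ∀ p q : ℝ, p ∈ Icc a (b+1) → q ∈ Icc a (b+1) →
        IntervalIntegrable g volume p q := by
      intro p q hp hq
      apply ContinuousOn.intervalIntegrable
      apply hgc.mono
      rw [uIcc_eq_union]
      exact union_subset (Icc_subset_Icc hp.1 hq.2) (Icc_subset_Icc hq.1 hp.2)
    have ha : a ∈ Icc a (b+1) := ⟨le_rfl, by linarith⟩
    have hb : b ∈ Icc a (b+1) := ⟨hab, by linarith⟩
    have hah : a + 1/(n+1:ℝ) ∈ Icc a (b+1) := hmem n a ⟨le_rfl, hab⟩
    have hbh : b + 1/(n+1:ℝ) ∈ Icc a (b+1) := hmem n b ⟨hab, le_rfl⟩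
    have e1 : ∫ x in Ioo a b, F n x = ∫ x in a..b, F n x := by
      rw [intervalIntegral.integral_of_le hab, integral_Ioc_eq_integral_Ioo]
    have hFi : IntervalIntegrable (fun x => g (x + 1/(n+1:ℝ))) volume a b := by
      apply ContinuousOn.intervalIntegrable
      rw [uIcc_of_le hab]
      exact hgc.comp (by fun_prop) (hmem n)
    have hgi : IntervalIntegrable g volume a b := hint a b ha hb
    have e2 : ∫ x in a..b, F n x
        = ((n:ℝ)+1) * ((∫ x in a..b, g (x + 1/(n+1:ℝ))) - ∫ x in a..b, g x) := by
      rw [← intervalIntegral.integral_sub hFi hgi, ← intervalIntegral.integral_const_mul]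
      apply intervalIntegral.integral_congr
      intro x _
      rw [hF]; ring
    have e3 : ∫ x in a..b, g (x + 1/(n+1:ℝ)) = ∫ x in (a+1/(n+1:ℝ))..(b+1/(n+1:ℝ)), g x :=
      intervalIntegral.integral_comp_add_right _ _
    have e4 : (∫ x in (a+1/(n+1:ℝ))..(b+1/(n+1:ℝ)), g x) - ∫ x in a..b, g x
        = (∫ x in b..(b+1/(n+1:ℝ)), g x) - ∫ x in a..(a+1/(n+1:ℝ)), g x := by
      have i1 : (∫ x in a..(a+1/(n+1:ℝ)), g x) + ∫ x in (a+1/(n+1:ℝ))..(b+1/(n+1:ℝ)), g x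
          = ∫ x in a..(b+1/(n+1:ℝ)), g x :=
        intervalIntegral.integral_add_adjacent_intervals (hint _ _ ha hah) (hint _ _ hah hbh)
      have i2 : (∫ x in a..b, g x) + ∫ x in b..(b+1/(n+1:ℝ)), g x
          = ∫ x in a..(b+1/(n+1:ℝ)), g x :=
        intervalIntegral.integral_add_adjacent_intervals (hint _ _ ha hb) (hint _ _ hb hbh)
      linarith
    rw [e1, e2, e3, e4]; ring
  -- conclusion: g b - g a equals the integral of the derivative
  have hlim2 : Tendsto (fun n => ∫ x in Ioo a b, F n x) atTop (𝓝 (g b - g a)) := by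
    simp only [hid]
    exact (havg b ⟨hab, le_rfl⟩).sub (havg a ⟨le_rfl, hab⟩)
  have heqd : g b - g a = ∫ x in Ioo a b, deriv g x :=
    tendsto_nhds_unique hlim2 hDCT
  rw [heqd]
  -- compare with φf
  have hderb : ∀ᵐ x ∂(volume.restrict (Ioo a b)), |deriv g x| ≤ (K:ℝ) := by
    filter_upwards [htend, ae_restrict_mem measurableSet_Ioo] with x hx hx2
    have : Tendsto (fun n => |F n x|) atTop (𝓝 |deriv g x|) := hx.abs
    apply le_of_tendsto this
    filter_upwards with n using hbnd n x (Ioo_subset_Icc_self hx2)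
  have hint1 : Integrable (deriv g) (volume.restrict (Ioo a b)) := by
    apply Integrable.mono' (integrable_const (K:ℝ))
    · exact (measurable_deriv g).aestronglyMeasurable
    · exact hderb
  have hint2 : Integrable φf (volume.restrict (Ioo a b)) :=
    (hφ.integrableOn_Icc).mono_set Ioo_subset_Icc_self
  exact integral_mono_ae hint1 hint2 hle


lemma exp_lip {lam c : ℝ} (hlam : 0 ≤ lam) :
    LipschitzOnWith (Real.toNNReal (lam * Real.exp (lam * c)))
      (fun x => Real.exp (lam * x)) (Icc 0 c) := by
  apply LipschitzOnWith.of_dist_le'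
  have key : ∀ u ∈ Icc (0:ℝ) c, ∀ v ∈ Icc (0:ℝ) c, u ≤ v →
      Real.exp (lam * v) - Real.exp (lam * u) ≤ lam * Real.exp (lam * c) * (v - u) := by
    intro u hu v hv huv
    have h1 : lam * u - lam * v + 1 ≤ Real.exp (lam * u - lam * v) := Real.add_one_le_exp _
    have h2 : Real.exp (lam * v) * Real.exp (lam * u - lam * v) = Real.exp (lam * u) := by
      rw [← Real.exp_add]; ring_nf
    have h3 : Real.exp (lam * v) ≤ Real.exp (lam * c) :=
      Real.exp_le_exp.2 (mul_le_mul_of_nonneg_left hv.2 hlam)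
    have h4 : (0:ℝ) < Real.exp (lam * v) := Real.exp_pos _
    nlinarith [Real.exp_pos (lam * u - lam * v), mul_nonneg hlam (sub_nonneg.2 huv)]
  intro x hx y hy
  rw [Real.dist_eq, Real.dist_eq]
  rcases le_total x y with h | h
  · rw [abs_of_nonpos (by simpa using Real.exp_le_exp.2 (mul_le_mul_of_nonneg_left h hlam)),
      abs_of_nonpos (by linarith)]
    have := key x hx y hy h
    linarith
  · rw [abs_of_nonneg (by simpa using Real.exp_le_exp.2 (mul_le_mul_of_nonneg_left h hlam)),
      abs_of_nonneg (by linarith)]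
    have := key y hy x hx h
    linarith

lemma lip_mul {f g : ℝ → ℝ} {s : Set ℝ} {Kf Kg : NNReal} {Bf Bg : ℝ}
    (hf : LipschitzOnWith Kf f s) (hg : LipschitzOnWith Kg g s)
    (hBf : ∀ x ∈ s, |f x| ≤ Bf) (hBg : ∀ x ∈ s, |g x| ≤ Bg) :
    LipschitzOnWith (Real.toNNReal (Bf * Kg + Bg * Kf)) (fun x => f x * g x) s := by
  apply LipschitzOnWith.of_dist_le'
  intro x hx y hy
  rw [Real.dist_eq, Real.dist_eq]
  have h1 := hf.dist_le_mul x hx y hy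
  have h2 := hg.dist_le_mul x hx y hy
  rw [Real.dist_eq, Real.dist_eq] at h1 h2
  have e : f x * g x - f y * g y = f x * (g x - g y) + g y * (f x - f y) := by ring
  calc |f x * g x - f y * g y| ≤ |f x * (g x - g y)| + |g y * (f x - f y)| := by
        rw [e]; exact abs_add_le _ _
    _ = |f x| * |g x - g y| + |g y| * |f x - f y| := by rw [abs_mul, abs_mul]
    _ ≤ Bf * ((Kg:ℝ) * |x - y|) + Bg * ((Kf:ℝ) * |x - y|) := by
        have hBf' := hBf x hx
        have hBg' := hBg y hy
        have := abs_nonneg (f x); have := abs_nonneg (g y)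
        have := abs_nonneg (x - y)
        nlinarith [abs_nonneg (g x - g y), abs_nonneg (f x - f y), Kf.coe_nonneg, Kg.coe_nonneg]
    _ = (Bf * Kg + Bg * Kf) * |x - y| := by ring

end FlockAux

section FlockMain
open Set Filter Topology

/-- Bootstrapping argument for asymptotic flocking: if `|D_X'| ≤ D_V` and
`D_V' ≤ −c φ(D_X) D_V` a.e., and `D_X(0) + D_V(0)/(c φ(D_X^∞)) < D_X^∞`, then
`D_X` stays below `D_X^∞` and `D_V` decays exponentially. -/
theorem flocking_bootstrap (c DXinf : ℝ) (hc : 0 < c) (hDXinf : 0 < DXinf)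
    (φ : ℝ → ℝ) (hφpos : ∀ r, 0 ≤ r → 0 < φ r) (hφmono : AntitoneOn φ (Set.Ici 0))
    (DX DV : ℝ → ℝ)
    (hDXnn : ∀ t, 0 ≤ t → 0 ≤ DX t) (hDVnn : ∀ t, 0 ≤ t → 0 ≤ DV t)
    (K₁ K₂ : NNReal) (hL₁ : LipschitzOnWith K₁ DX (Set.Ici 0))
    (hL₂ : LipschitzOnWith K₂ DV (Set.Ici 0))
    (hderiv : ∀ᵐ t ∂(volume.restrict (Set.Ioi (0:ℝ))),
      |deriv DX t| ≤ DV t ∧ deriv DV t ≤ -(c * φ (DX t)) * DV t)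
    (hinit : DX 0 + DV 0 / (c * φ DXinf) < DXinf) :
    ∀ t, 0 ≤ t → DX t < DXinf ∧ DV t ≤ DV 0 * Real.exp (-(c * φ DXinf) * t) := by
  set lam := c * φ DXinf with hlamdef
  have hφinf : 0 < φ DXinf := hφpos _ hDXinf.le
  have hlam0 : 0 < lam := mul_pos hc hφinf
  set B := DV 0 / lam with hBdef
  have hDV0 : 0 ≤ DV 0 := hDVnn 0 le_rfl
  have hB0 : 0 ≤ B := div_nonneg hDV0 hlam0.le
  set M := DX 0 + B with hMdef
  have hMlt : M < DXinf := hinit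
  -- differentiability of DV a.e.
  have hdiffDV : ∀ᵐ x, x ∈ Ici (0:ℝ) → DifferentiableWithinAt ℝ DV (Ici 0) x :=
    hL₂.ae_differentiableWithinAt_of_mem_real
  -- Gronwall step
  have gron : ∀ T, 0 ≤ T → (∀ s, 0 ≤ s → s ≤ T → DX s ≤ DXinf) →
      ∀ t, 0 ≤ t → t ≤ T → DV t ≤ DV 0 * Real.exp (-lam * t) := by
    intro T hT hS t ht htT
    set h : ℝ → ℝ := fun x => DV x * Real.exp (lam * x) with hhdef
    -- Lipschitz data for h on Icc 0 (t+1)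
    have hsub : Icc (0:ℝ) (t+1) ⊆ Ici 0 := fun x hx => hx.1
    have hDVlip : LipschitzOnWith K₂ DV (Icc 0 (t+1)) := hL₂.mono hsub
    have hDVb : ∀ x ∈ Icc (0:ℝ) (t+1), |DV x| ≤ DV 0 + K₂ * (t+1) := by
      intro x hx
      have := hL₂.dist_le_mul x (hsub hx) 0 Set.self_mem_Ici
      rw [Real.dist_eq, Real.dist_eq, sub_zero] at this
      rw [abs_of_nonneg (hDVnn x hx.1)]
      have hxabs : |x| = x := abs_of_nonneg hx.1
      rw [hxabs] at this
      have h2 : (K₂:ℝ) * x ≤ K₂ * (t+1) := mul_le_mul_of_nonneg_left hx.2 K₂.coe_nonneg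
      have h3 := abs_sub_abs_le_abs_sub (DV x) (DV 0)
      have := abs_of_nonneg (hDVnn x hx.1)
      have := abs_of_nonneg hDV0
      nlinarith [abs_nonneg (DV x - DV 0)]
    have hexplip := exp_lip (c := t+1) hlam0.le
    have hexpb : ∀ x ∈ Icc (0:ℝ) (t+1), |Real.exp (lam * x)| ≤ Real.exp (lam * (t+1)) := by
      intro x hx
      rw [abs_of_pos (Real.exp_pos _)]
      exact Real.exp_le_exp.2 (mul_le_mul_of_nonneg_left hx.2 hlam0.le)
    have hhlip := lip_mul hDVlip hexplip hDVb hexpb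
    -- a.e. derivative bound for h on Ioo 0 t
    have hae : ∀ᵐ x ∂(volume.restrict (Ioo (0:ℝ) t)), deriv h x ≤ (fun _ => (0:ℝ)) x := by
      have h1 : ∀ᵐ x ∂(volume.restrict (Ioo (0:ℝ) t)),
          |deriv DX x| ≤ DV x ∧ deriv DV x ≤ -(c * φ (DX x)) * DV x :=
        ae_restrict_of_ae_restrict_of_subset Ioo_subset_Ioi_self hderiv
      filter_upwards [h1, ae_restrict_of_ae hdiffDV, ae_restrict_mem measurableSet_Ioo]
        with x hx hdx hmem
      have hx0 : (0:ℝ) < x := hmem.1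
      have hdiffx : DifferentiableAt ℝ DV x := by
        apply (hdx (le_of_lt hx0)).differentiableAt
        exact Ici_mem_nhds hx0
      have hde : HasDerivAt (fun y => Real.exp (lam * y)) (Real.exp (lam * x) * lam) x := by
        have : HasDerivAt (fun y : ℝ => lam * y) lam x := by
          simpa using (hasDerivAt_id x).const_mul lam
        exact this.exp
      have hd : HasDerivAt h (deriv DV x * Real.exp (lam * x) + DV x * (Real.exp (lam * x) * lam))
          x := hdiffx.hasDerivAt.mul hde
      rw [hd.deriv]
      have hDXx : DX x ≤ DXinf := hS x hx0.le (hmem.2.le.trans htT)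
      have hφge : φ DXinf ≤ φ (DX x) :=
        hφmono (hDXnn x hx0.le) hDXinf.le hDXx
      have hDVx : 0 ≤ DV x := hDVnn x hx0.le
      have hderx : deriv DV x ≤ -lam * DV x := by
        refine hx.2.trans ?_
        have := mul_le_mul_of_nonneg_right (mul_le_mul_of_nonneg_left hφge hc.le) hDVx
        rw [hlamdef]
        nlinarith [this]
      have hepos : 0 < Real.exp (lam * x) := Real.exp_pos _
      nlinarith
    have hmain := lip_ftc_le (a := 0) (b := t) ht hhlip
      (continuousOn_const : ContinuousOn (fun _ => (0:ℝ)) (Icc 0 t)) hae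
    rw [integral_zero] at hmain
    have hht : DV t * Real.exp (lam * t) ≤ DV 0 := by
      simp only [mul_zero, Real.exp_zero, mul_one] at hmain
      linarith
    have hmul : Real.exp (-lam * t) * Real.exp (lam * t) = 1 := by
      rw [← Real.exp_add]; ring_nf; exact Real.exp_zero
    have he1 : 0 < Real.exp (-lam * t) := Real.exp_pos _
    have he2 : 0 < Real.exp (lam * t) := Real.exp_pos _
    nlinarith [hDVnn t ht]
  -- key bound on DX
  have key : ∀ T, 0 ≤ T → (∀ s, 0 ≤ s → s ≤ T → DX s ≤ DXinf) → DX T ≤ M := by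
    intro T hT hS
    have hDXlip : LipschitzOnWith K₁ DX (Icc 0 (T+1)) := hL₁.mono (fun x hx => hx.1)
    have hφc : ContinuousOn (fun s => DV 0 * Real.exp (-lam * s)) (Icc 0 T) := by
      fun_prop
    have hae : ∀ᵐ x ∂(volume.restrict (Ioo (0:ℝ) T)),
        deriv DX x ≤ DV 0 * Real.exp (-lam * x) := by
      have h1 : ∀ᵐ x ∂(volume.restrict (Ioo (0:ℝ) T)),
          |deriv DX x| ≤ DV x ∧ deriv DV x ≤ -(c * φ (DX x)) * DV x :=
        ae_restrict_of_ae_restrict_of_subset Ioo_subset_Ioi_self hderiv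
      filter_upwards [h1, ae_restrict_mem measurableSet_Ioo] with x hx hmem
      calc deriv DX x ≤ |deriv DX x| := le_abs_self _
        _ ≤ DV x := hx.1
        _ ≤ DV 0 * Real.exp (-lam * x) := gron T hT hS x hmem.1.le hmem.2.le
    have hmain := lip_ftc_le (a := 0) (b := T) hT hDXlip hφc hae
    -- compute the integral bound
    have hFder : ∀ x : ℝ, HasDerivAt (fun y => -(1/lam) * Real.exp (-lam * y))
        (Real.exp (-lam * x)) x := by
      intro x
      have h1 : HasDerivAt (fun y : ℝ => -lam * y) (-lam) x := by
        simpa using (hasDerivAt_id x).const_mul (-lam)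
      have h2 := (h1.exp).const_mul (-(1/lam))
      refine h2.congr_deriv ?_
      have hl : lam ≠ 0 := hlam0.ne'
      field_simp
    have hieq : ∫ x in Ioo (0:ℝ) T, DV 0 * Real.exp (-lam * x)
        = DV 0 * ∫ x in (0:ℝ)..T, Real.exp (-lam * x) := by
      rw [intervalIntegral.integral_of_le hT, integral_Ioc_eq_integral_Ioo,
        ← integral_const_mul]
    have hival : ∫ x in (0:ℝ)..T, Real.exp (-lam * x)
        = -(1/lam) * Real.exp (-lam * T) - -(1/lam) * Real.exp (-lam * 0) := by
      apply intervalIntegral.integral_eq_sub_of_hasDerivAt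
      · intro x _
        exact hFder x
      · apply ContinuousOn.intervalIntegrable
        fun_prop
    have hint_le : ∫ x in Ioo (0:ℝ) T, DV 0 * Real.exp (-lam * x) ≤ B := by
      rw [hieq, hival]
      have he1 : 0 < Real.exp (-lam * T) := Real.exp_pos _
      have : -(1/lam) * Real.exp (-lam * T) - -(1/lam) * Real.exp (-lam * 0) ≤ 1/lam := by
        rw [show -lam * 0 = 0 by ring, Real.exp_zero]
        have hl : 0 < 1/lam := by positivity
        nlinarith
      rw [hBdef]
      calc DV 0 * (-(1/lam) * Real.exp (-lam * T) - -(1/lam) * Real.exp (-lam * 0))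
          ≤ DV 0 * (1/lam) := mul_le_mul_of_nonneg_left this hDV0
        _ = DV 0 / lam := by ring
    rw [hMdef]
    linarith
  -- continuation by fixed step δ
  set δ : ℝ := (DXinf - M) / ((K₁:ℝ) + 1) with hδdef
  have hδ : 0 < δ := by
    apply div_pos (by linarith) (by positivity)
  have step : ∀ T, 0 ≤ T → (∀ s, 0 ≤ s → s ≤ T → DX s ≤ DXinf) →
      ∀ s, 0 ≤ s → s ≤ T + δ → DX s ≤ DXinf := by
    intro T hT hS s hs hsδ
    rcases le_or_gt s T with hcase | hcase
    · exact hS s hs hcase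
    · have h1 : DX T ≤ M := key T hT hS
      have h2 : DX s ≤ DX T + K₁ * (s - T) := by
        have := hL₁.dist_le_mul s hs T hT
        rw [Real.dist_eq, Real.dist_eq] at this
        have habs : |s - T| = s - T := abs_of_pos (by linarith)
        rw [habs] at this
        have := abs_sub_abs_le_abs_sub (DX s) (DX T)
        have h3 := le_abs_self (DX s - DX T)
        nlinarith [abs_nonneg (DX s - DX T)]
      have h4 : (K₁:ℝ) * (s - T) ≤ (K₁:ℝ) * δ :=
        mul_le_mul_of_nonneg_left (by linarith) K₁.coe_nonneg
      have h5 : (K₁:ℝ) * δ ≤ DXinf - M := by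
        have hk1 : (0:ℝ) < (K₁:ℝ) + 1 := by positivity
        rw [hδdef, mul_comm, div_mul_eq_mul_div, div_le_iff₀ hk1]
        nlinarith [K₁.coe_nonneg]
      linarith
  have all : ∀ n : ℕ, ∀ s, 0 ≤ s → s ≤ n * δ → DX s ≤ DXinf := by
    intro n
    induction n with
    | zero =>
      intro s hs h
      have hs0 : s = 0 := le_antisymm (by simpa using h) hs
      subst hs0
      have : DX 0 ≤ M := by rw [hMdef]; linarith
      linarith
    | succ n ih =>
      intro s hs h
      have hle : s ≤ (n:ℝ) * δ + δ := by
        have : ((n:ℝ)+1) * δ = (n:ℝ) * δ + δ := by ring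
        rw [Nat.cast_succ] at h
        linarith [h.trans_eq this]
      exact step ((n:ℝ) * δ) (by positivity) ih s hs hle
  intro t ht
  obtain ⟨n, hn⟩ := exists_nat_ge (t/δ)
  have htn : t ≤ (n:ℝ) * δ := by
    rw [div_le_iff₀ hδ] at hn
    linarith
  have hSt : ∀ s, 0 ≤ s → s ≤ t → DX s ≤ DXinf := fun s hs h => all n s hs (h.trans htn)
  refine ⟨lt_of_le_of_lt (key t ht hSt) hMlt, ?_⟩
  have := gron t ht hSt t ht le_rfl
  rw [hlamdef] at this
  exact this

end FlockMain
end

section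
/- Let D_T(t) = max_{i,j} |T_i(t) − T_j(t)| along the temperature dynamics with temperatures bounded in [T_m^∞, T_M^∞] and pairwise weights ζ_{ij} ≥ ζ(D_X^∞) > 0. Then dD_T/dt ≤ −(κ₂ ζ(D_X^∞)/(T_M^∞)²) D_T a.e., and hence D_T(t) ≤ D_T(0) exp(−κ₂ ζ(D_X^∞) t/(T_M^∞)²). -/
open MeasureTheory Set Filter Topology

/-- Exponential decay of the temperature diameter `D_T(t) = max_{i,j} |Tᵢ(t) − Tⱼ(t)|`:
`dD_T/dt ≤ −(κ₂ ζ(D_X^∞)/(T_M^∞)²) D_T` a.e., hence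
`D_T(t) ≤ D_T(0) exp(−κ₂ ζ(D_X^∞) t/(T_M^∞)²)`. -/
theorem temperature_diameter_decay {ι : Type*} [Fintype ι] [Nonempty ι]
    (κ₂ Tm TM ζinf : ℝ) (hκ₂ : 0 < κ₂) (hTm : 0 < Tm) (hTmTM : Tm ≤ TM) (hζinf : 0 < ζinf)
    (T : ι → ℝ → ℝ) (ζw : ι → ι → ℝ → ℝ)
    (hζsym : ∀ i j t, ζw i j t = ζw j i t)
    (hζlb : ∀ i j t, 0 ≤ t → ζinf ≤ ζw i j t)
    (hbd : ∀ i t, 0 ≤ t → Tm ≤ T i t ∧ T i t ≤ TM)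
    (hode : ∀ i t, 0 ≤ t → HasDerivAt (T i)
      ((κ₂ / (Fintype.card ι : ℝ)) * ∑ j, ζw i j t * (1 / T i t - 1 / T j t)) t) :
    (∀ᵐ t ∂(volume.restrict (Set.Ioi (0:ℝ))),
      deriv (fun s => Finset.univ.sup' Finset.univ_nonempty
          (fun p : ι × ι => |T p.1 s - T p.2 s|)) t ≤
        -(κ₂ * ζinf / TM ^ 2) * Finset.univ.sup' Finset.univ_nonempty
          (fun p : ι × ι => |T p.1 t - T p.2 t|)) ∧
    ∀ t, 0 ≤ t →
      Finset.univ.sup' Finset.univ_nonempty (fun p : ι × ι => |T p.1 t - T p.2 t|) ≤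
        Finset.univ.sup' Finset.univ_nonempty (fun p : ι × ι => |T p.1 0 - T p.2 0|) *
          Real.exp (-(κ₂ * ζinf / TM ^ 2) * t) := by
  classical
  have hTM : 0 < TM := lt_of_lt_of_le hTm hTmTM
  set c : ℝ := κ₂ * ζinf / TM ^ 2 with hc
  have hcpos : 0 < c := by positivity
  obtain ⟨i₀⟩ := ‹Nonempty ι›
  set N : ℝ := (Fintype.card ι : ℝ) with hN
  have hNpos : 0 < N := by
    rw [hN]
    exact_mod_cast Fintype.card_pos (α := ι)
  set f : ι × ι → ℝ → ℝ := fun p s => T p.1 s - T p.2 s with hfdef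
  set D : ℝ → ℝ := fun s => Finset.univ.sup' Finset.univ_nonempty (fun p : ι × ι => f p s)
    with hDdef
  have hfle : ∀ (p : ι × ι) (s : ℝ), f p s ≤ D s := fun p s =>
    Finset.le_sup' (fun p : ι × ι => f p s) (Finset.mem_univ p)
  have hDnn : ∀ s, 0 ≤ D s := by
    intro s
    have := hfle (i₀, i₀) s
    simpa [hfdef] using this
  have habs : ∀ s, Finset.univ.sup' Finset.univ_nonempty
      (fun p : ι × ι => |T p.1 s - T p.2 s|) = D s := by
    intro s
    apply le_antisymm
    · apply Finset.sup'_le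
      intro p _
      rw [abs_sub_le_iff]
      exact ⟨hfle p s, hfle p.swap s⟩
    · apply Finset.sup'_le
      intro p _
      exact le_trans (le_abs_self _)
        (Finset.le_sup' (fun p : ι × ι => |T p.1 s - T p.2 s|) (Finset.mem_univ p))
  -- continuity
  have hTc : ∀ i t, (0:ℝ) ≤ t → ContinuousAt (T i) t := fun i t ht => (hode i t ht).continuousAt
  have hDc : ∀ t, (0:ℝ) ≤ t → ContinuousAt D t := by
    intro t ht
    exact Filter.Tendsto.finset_sup'_nhds_apply Finset.univ_nonempty
      (fun p _ => ((hTc p.1 t ht).sub (hTc p.2 t ht)))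
  -- derivative of pair differences
  set d : ι × ι → ℝ → ℝ := fun p t =>
    (κ₂ / N) * ∑ j, ζw p.1 j t * (1 / T p.1 t - 1 / T j t) -
    (κ₂ / N) * ∑ j, ζw p.2 j t * (1 / T p.2 t - 1 / T j t) with hddef
  have hfd : ∀ (p : ι × ι) (t : ℝ), 0 ≤ t → HasDerivAt (f p) (d p t) t := fun p t ht =>
    (hode p.1 t ht).sub (hode p.2 t ht)
  -- key pointwise estimate at a maximizing pair
  have hkey : ∀ t, 0 ≤ t → ∀ p : ι × ι, f p t = D t → d p t ≤ -c * D t := by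
    intro t ht p hp
    have hpos : ∀ j, 0 < T j t := fun j => lt_of_lt_of_le hTm (hbd j t ht).1
    have hub : ∀ j, T j t ≤ TM := fun j => (hbd j t ht).2
    have hmax : ∀ j, T j t ≤ T p.1 t := by
      intro j
      have h1 := hfle (j, p.2) t
      rw [← hp] at h1
      simp only [hfdef] at h1
      linarith
    have hmin : ∀ j, T p.2 t ≤ T j t := by
      intro j
      have h1 := hfle (p.1, j) t
      rw [← hp] at h1
      simp only [hfdef] at h1
      linarith
    have hterm : ∀ j, ζw p.1 j t * (1 / T p.1 t - 1 / T j t)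
        - ζw p.2 j t * (1 / T p.2 t - 1 / T j t)
        ≤ ζinf * (1 / T p.1 t - 1 / T p.2 t) := by
      intro j
      have hu : 1 / T p.1 t - 1 / T j t ≤ 0 := by
        have := one_div_le_one_div_of_le (hpos j) (hmax j)
        linarith
      have hv : 0 ≤ 1 / T p.2 t - 1 / T j t := by
        have := one_div_le_one_div_of_le (hpos p.2) (hmin j)
        linarith
      have e1 : ζw p.1 j t * (1 / T p.1 t - 1 / T j t) ≤ ζinf * (1 / T p.1 t - 1 / T j t) := by
        nlinarith [hζlb p.1 j t ht]
      have e2 : ζinf * (1 / T p.2 t - 1 / T j t) ≤ ζw p.2 j t * (1 / T p.2 t - 1 / T j t) := by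
        nlinarith [hζlb p.2 j t ht]
      have e3 : ζinf * (1 / T p.1 t - 1 / T j t) - ζinf * (1 / T p.2 t - 1 / T j t)
          = ζinf * (1 / T p.1 t - 1 / T p.2 t) := by ring
      linarith
    have hsum : (∑ j, ζw p.1 j t * (1 / T p.1 t - 1 / T j t)) -
        (∑ j, ζw p.2 j t * (1 / T p.2 t - 1 / T j t))
        ≤ N * (ζinf * (1 / T p.1 t - 1 / T p.2 t)) := by
      rw [← Finset.sum_sub_distrib]
      calc (∑ j, (ζw p.1 j t * (1 / T p.1 t - 1 / T j t)
            - ζw p.2 j t * (1 / T p.2 t - 1 / T j t)))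
          ≤ ∑ _j : ι, ζinf * (1 / T p.1 t - 1 / T p.2 t) :=
            Finset.sum_le_sum (fun j _ => hterm j)
        _ = N * (ζinf * (1 / T p.1 t - 1 / T p.2 t)) := by
            rw [Finset.sum_const, Finset.card_univ, nsmul_eq_mul, hN]
    have hdle : d p t ≤ κ₂ * ζinf * (1 / T p.1 t - 1 / T p.2 t) := by
      have h1 : d p t = (κ₂ / N) * ((∑ j, ζw p.1 j t * (1 / T p.1 t - 1 / T j t)) -
          (∑ j, ζw p.2 j t * (1 / T p.2 t - 1 / T j t))) := by
        rw [hddef]; ring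
      rw [h1]
      have h2 := mul_le_mul_of_nonneg_left hsum (le_of_lt (div_pos hκ₂ hNpos))
      calc (κ₂ / N) * ((∑ j, ζw p.1 j t * (1 / T p.1 t - 1 / T j t)) -
            (∑ j, ζw p.2 j t * (1 / T p.2 t - 1 / T j t)))
          ≤ (κ₂ / N) * (N * (ζinf * (1 / T p.1 t - 1 / T p.2 t))) := h2
        _ = κ₂ * ζinf * (1 / T p.1 t - 1 / T p.2 t) := by
            field_simp
    -- now  κ₂ ζinf (1/T₁ - 1/T₂) ≤ -c D
    have hP : 0 < T p.1 t * T p.2 t := mul_pos (hpos p.1) (hpos p.2)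
    have hPle : T p.1 t * T p.2 t ≤ TM ^ 2 := by nlinarith [hpos p.1, hpos p.2, hub p.1, hub p.2]
    have hp' : T p.1 t - T p.2 t = D t := by
      rw [← hp]
    have hu : 1 / T p.1 t - 1 / T p.2 t = -(D t / (T p.1 t * T p.2 t)) := by
      rw [← hp']
      rw [div_sub_div _ _ (hpos p.1).ne' (hpos p.2).ne', ← neg_div]
      congr 1
      ring
    have hdiv : D t / TM ^ 2 ≤ D t / (T p.1 t * T p.2 t) :=
      div_le_div_of_nonneg_left (hDnn t) hP hPle
    have hmul := mul_le_mul_of_nonneg_left hdiv (by positivity : (0:ℝ) ≤ κ₂ * ζinf)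
    have : κ₂ * ζinf * (1 / T p.1 t - 1 / T p.2 t) ≤ -c * D t := by
      rw [hu, hc]
      have heq1 : κ₂ * ζinf * -(D t / (T p.1 t * T p.2 t))
          = -(κ₂ * ζinf * (D t / (T p.1 t * T p.2 t))) := by ring
      have heq2 : -(κ₂ * ζinf / TM ^ 2) * D t = -(κ₂ * ζinf * (D t / TM ^ 2)) := by ring
      rw [heq1, heq2]
      exact neg_le_neg hmul
    exact le_trans hdle this
  -- slope estimate for D
  have hslope : ∀ x, 0 ≤ x → ∀ r, -c * D x < r → ∀ᶠ z in 𝓝[>] x, slope D x z < r := by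
    intro x hx r hr
    set P : Finset (ι × ι) := Finset.univ.filter (fun p : ι × ι => f p x = D x) with hPdef
    obtain ⟨p₀, -, hp₀⟩ := Finset.exists_mem_eq_sup' Finset.univ_nonempty (fun p : ι × ι => f p x)
    have hPne : P.Nonempty := ⟨p₀, Finset.mem_filter.2 ⟨Finset.mem_univ _, hp₀.symm⟩⟩
    have ev1 : ∀ᶠ z in 𝓝[>] x, ∀ p ∈ P, slope (f p) x z < r := by
      rw [Finset.eventually_all]
      intro p hp
      have hpP : f p x = D x := (Finset.mem_filter.1 hp).2
      have hd := hkey x hx p hpP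
      have htend : Tendsto (slope (f p) x) (𝓝[≠] x) (𝓝 (d p x)) :=
        (hasDerivAt_iff_tendsto_slope).1 (hfd p x hx)
      have htend' : Tendsto (slope (f p) x) (𝓝[>] x) (𝓝 (d p x)) :=
        htend.mono_left (nhdsWithin_mono x (fun z hz => ne_of_gt hz))
      exact htend'.eventually (eventually_lt_nhds (lt_of_le_of_lt hd hr))
    have ev2 : ∀ᶠ z in 𝓝[>] x, ∀ q ∈ (Finset.univ : Finset (ι × ι)) \ P,
        f q z < D x + r * (z - x) := by
      rw [Finset.eventually_all]
      intro q hq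
      have hqP : f q x ≠ D x := by
        intro h
        exact (Finset.mem_sdiff.1 hq).2 (Finset.mem_filter.2 ⟨Finset.mem_univ _, h⟩)
      have hqlt : f q x < D x := lt_of_le_of_ne (hfle q x) hqP
      have htend : Tendsto (fun z => D x + r * (z - x) - f q z) (𝓝[>] x)
          (𝓝 (D x + r * (x - x) - f q x)) := by
        apply Tendsto.mono_left _ nhdsWithin_le_nhds
        exact (tendsto_const_nhds.add ((tendsto_const_nhds.mul
          ((continuous_id.sub continuous_const).tendsto x)))).sub
          ((hTc q.1 x hx).sub (hTc q.2 x hx))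
      have hpos2 : 0 < D x + r * (x - x) - f q x := by
        simp only [sub_self, mul_zero, add_zero]
        linarith
      have := htend.eventually (eventually_gt_nhds hpos2)
      filter_upwards [this] with z hz
      linarith
    filter_upwards [ev1, ev2, self_mem_nhdsWithin] with z hz1 hz2 (hz3 : x < z)
    have hDz : D z < D x + r * (z - x) := by
      show (Finset.univ.sup' Finset.univ_nonempty fun p : ι × ι => f p z) < D x + r * (z - x)
      apply (Finset.sup'_lt_iff Finset.univ_nonempty).2
      intro q _
      by_cases hqP : q ∈ P
      · have hs := hz1 q hqP
        rw [slope_def_field, div_lt_iff₀ (by linarith : (0:ℝ) < z - x)] at hs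
        have hqx : f q x = D x := (Finset.mem_filter.1 hqP).2
        linarith
      · exact hz2 q (Finset.mem_sdiff.2 ⟨Finset.mem_univ _, hqP⟩)
    rw [slope_def_field, div_lt_iff₀ (by linarith : (0:ℝ) < z - x)]
    linarith
  -- Gronwall-type decay
  have hgron : ∀ a, 0 ≤ a → ∀ b, a ≤ b → D b ≤ D a * Real.exp (-c * (b - a)) := by
    intro a ha b hab
    have main : ∀ ε, 0 < ε → ε < c → D b ≤ (D a + ε) * Real.exp (-(c - ε) * (b - a)) := by
      intro ε hε hεc
      set B : ℝ → ℝ := fun x => (D a + ε) * Real.exp (-(c - ε) * (x - a)) with hBdef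
      have hB : ∀ x, HasDerivAt B (-(c - ε) * B x) x := by
        intro x
        have h1 : HasDerivAt (fun x : ℝ => -(c - ε) * (x - a)) (-(c - ε)) x := by
          simpa using ((hasDerivAt_id x).sub_const a).const_mul (-(c - ε))
        have h2 := (Real.hasDerivAt_exp (-(c - ε) * (x - a))).comp x h1
        have h3 := h2.const_mul (D a + ε)
        exact h3.congr_deriv (by
          show _ = -(c - ε) * ((D a + ε) * Real.exp (-(c - ε) * (x - a)))
          ring)
      have hBpos : ∀ x, 0 < B x := by
        intro x
        have := hDnn a
        positivity
      have := image_le_of_liminf_slope_right_lt_deriv_boundary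
        (f := D) (f' := fun x => -c * D x) (B := B) (B' := fun x => -(c - ε) * B x)
        (a := a) (b := b)
        (fun x hx => (hDc x (le_trans ha hx.1)).continuousWithinAt)
        (fun x hx r hr => ((hslope x (le_trans ha hx.1) r hr).frequently))
        (by
          simp only [hBdef, sub_self, mul_zero, Real.exp_zero, mul_one]
          linarith)
        hB
        (fun x hx hDB => by
          show -c * D x < -(c - ε) * B x
          rw [hDB]
          nlinarith [hBpos x])
      exact this (right_mem_Icc.2 hab)
    have htendB : Tendsto (fun ε => (D a + ε) * Real.exp (-(c - ε) * (b - a))) (𝓝[>] 0)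
        (𝓝 ((D a + 0) * Real.exp (-(c - 0) * (b - a)))) := by
      apply Tendsto.mono_left _ nhdsWithin_le_nhds
      have : Continuous (fun ε : ℝ => (D a + ε) * Real.exp (-(c - ε) * (b - a))) :=
        (continuous_const.add continuous_id).mul
          (Real.continuous_exp.comp ((continuous_const.sub continuous_id).neg.mul
            continuous_const))
      exact this.tendsto 0
    have hev : ∀ᶠ ε in 𝓝[>] (0:ℝ), D b ≤ (D a + ε) * Real.exp (-(c - ε) * (b - a)) := by
      filter_upwards [Ioo_mem_nhdsGT hcpos] with ε hε
      exact main ε hε.1 hε.2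
    have := ge_of_tendsto htendB hev
    simpa using this
  refine ⟨?_, ?_⟩
  · -- a.e. derivative bound
    set ψ : ℝ → ℝ := fun s => D (max s 0) * Real.exp (c * max s 0) with hψdef
    have hψanti : Antitone ψ := by
      intro s u hsu
      have ha : (0:ℝ) ≤ max s 0 := le_max_right _ _
      have hab : max s 0 ≤ max u 0 := max_le_max hsu le_rfl
      have h1 := hgron (max s 0) ha (max u 0) hab
      have h2 := mul_le_mul_of_nonneg_right h1 (Real.exp_pos (c * max u 0)).le
      calc ψ u = D (max u 0) * Real.exp (c * max u 0) := rfl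
        _ ≤ D (max s 0) * Real.exp (-c * (max u 0 - max s 0)) * Real.exp (c * max u 0) := h2
        _ = D (max s 0) * Real.exp (c * max s 0) := by
            rw [mul_assoc, ← Real.exp_add]
            ring_nf
        _ = ψ s := rfl
    have hmono : Monotone (fun s => -ψ s) := fun s u h => neg_le_neg (hψanti h)
    have hae := hmono.ae_differentiableAt
    have h1 : ∀ᵐ t ∂(volume.restrict (Set.Ioi (0:ℝ))),
        DifferentiableAt ℝ (fun s => -ψ s) t := ae_restrict_of_ae hae
    have h2 : ∀ᵐ t ∂(volume.restrict (Set.Ioi (0:ℝ))), t ∈ Set.Ioi (0:ℝ) :=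
      ae_restrict_mem measurableSet_Ioi
    filter_upwards [h1, h2] with t hdiff (ht : 0 < t)
    have hψdiff : DifferentiableAt ℝ ψ t := by
      have := hdiff.neg
      simpa using this
    have hDeq : D =ᶠ[𝓝 t] fun s => ψ s * Real.exp (-(c * s)) := by
      filter_upwards [eventually_mem_nhds_iff.2 (isOpen_Ioi.mem_nhds ht) |>.mono
        (fun z hz => mem_of_mem_nhds hz)] with s (hs : 0 < s)
      simp only [hψdef, max_eq_left hs.le]
      rw [mul_assoc, ← Real.exp_add, add_neg_cancel, Real.exp_zero, mul_one]
    have hexpdiff : DifferentiableAt ℝ (fun s : ℝ => Real.exp (-(c * s))) t :=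
      (((differentiableAt_fun_id.const_mul c).neg).exp)
    have hDdiff : DifferentiableAt ℝ D t := by
      rw [hDeq.differentiableAt_iff]
      exact hψdiff.mul hexpdiff
    -- rewrite goal
    have hfun : (fun s => Finset.univ.sup' Finset.univ_nonempty
        (fun p : ι × ι => |T p.1 s - T p.2 s|)) = D := funext habs
    rw [hfun, habs t]
    obtain ⟨p, -, hp⟩ := Finset.exists_mem_eq_sup' Finset.univ_nonempty (fun p : ι × ι => f p t)
    have hpD : f p t = D t := hp.symm
    have hgmin : IsLocalMin (fun s => D s - f p s) t := by
      apply Filter.Eventually.of_forall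
      intro s
      have := hfle p s
      simp only [hpD]
      simp only [sub_self]
      linarith [hfle p s]
    have hfp := hfd p t ht.le
    have hgderiv : deriv (fun s => D s - f p s) t = 0 := hgmin.deriv_eq_zero
    have hsub : deriv (fun s => D s - f p s) t = deriv D t - d p t := by
      rw [deriv_fun_sub hDdiff hfp.differentiableAt, hfp.deriv]
    have : deriv D t = d p t := by linarith [hsub ▸ hgderiv]
    rw [this]
    exact hkey t ht.le p hpD
  · intro t ht
    rw [habs t, habs 0]
    have := hgron 0 le_rfl t ht
    simpa using this
end

section
/- If the velocity diameter satisfies ∫₀^∞ D_V(s) ds ≤ M and the initial minimal separation min_{i≠j} |x_i^k(0) − x_j^k(0)| in some coordinate k strictly exceeds M, then for all i ≠ j and all t ≥ 0, ‖x_i(t) − x_j(t)‖ ≥ min_{i≠j}|x_i^k(0) − x_j^k(0)| − M > 0; i.e., the particles maintain strict spacing and never collide. -/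
open MeasureTheory

lemma coord_abs_le_norm {d : ℕ} (y : EuclideanSpace ℝ (Fin d)) (k : Fin d) :
    |y k| ≤ ‖y‖ := by
  rw [EuclideanSpace.norm_eq]
  have h1 : |y k| = Real.sqrt (‖y k‖ ^ 2) := by
    rw [Real.sqrt_sq_eq_abs, abs_norm, Real.norm_eq_abs]
  rw [h1]
  apply Real.sqrt_le_sqrt
  exact Finset.single_le_sum (f := fun i => ‖y i‖ ^ 2) (fun i _ => sq_nonneg _)
    (Finset.mem_univ k)

/-- Strict spacing: if `∫₀^∞ D_V ≤ M` and the minimal initial separation in some coordinate `k`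
strictly exceeds `M`, then for all `i ≠ j` and all `t ≥ 0`,
`‖xᵢ(t) − xⱼ(t)‖ ≥ min_{i≠j} |xᵢᵏ(0) − xⱼᵏ(0)| − M > 0`. -/
theorem strict_spacing {d : ℕ} {ι : Type*} [Fintype ι] [DecidableEq ι] [Nontrivial ι]
    (M : ℝ) (k : Fin d)
    (x v : ι → ℝ → EuclideanSpace ℝ (Fin d))
    (hx : ∀ i t, 0 ≤ t → HasDerivAt (x i) (v i t) t)
    (DV : ℝ → ℝ)
    (hDV : DV = fun t => Finset.univ.sup' Finset.univ_nonempty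
      (fun p : ι × ι => ‖v p.1 t - v p.2 t‖))
    (hDVint : IntegrableOn DV (Set.Ioi 0))
    (hM : (∫ s in Set.Ioi (0:ℝ), DV s) ≤ M)
    (m : ℝ)
    (hm : m = (Finset.univ.filter fun p : ι × ι => p.1 ≠ p.2).inf'
      (by simp [Finset.filter_nonempty_iff]; exact exists_pair_ne ι)
      (fun p : ι × ι => |x p.1 0 k - x p.2 0 k|))
    (hsep : M < m) :
    ∀ i j : ι, i ≠ j → ∀ t, 0 ≤ t → m - M ≤ ‖x i t - x j t‖ ∧ 0 < m - M := by
  intro i j hij t ht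
  refine ⟨?_, by linarith⟩
  -- DV is nonnegative
  have hDV0 : ∀ s, 0 ≤ DV s := by
    intro s
    rw [hDV]
    have := Finset.le_sup' (fun p : ι × ι => ‖v p.1 s - v p.2 s‖)
      (Finset.mem_univ (i, i))
    simpa using this
  -- pointwise bound on the coordinate derivative
  have hbound : ∀ s, |v i s k - v j s k| ≤ DV s := by
    intro s
    have h1 : |v i s k - v j s k| = |(v i s - v j s) k| := by
      simp [PiLp.sub_apply]
    have h2 : |(v i s - v j s) k| ≤ ‖v i s - v j s‖ := coord_abs_le_norm _ _
    have h3 : ‖v i s - v j s‖ ≤ DV s := by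
      rw [hDV]
      exact Finset.le_sup' (fun p : ι × ι => ‖v p.1 s - v p.2 s‖)
        (Finset.mem_univ (i, j))
    linarith
  set f : ℝ → ℝ := fun s => x i s k - x j s k with hf
  set g : ℝ → ℝ := fun s => v i s k - v j s k with hg
  -- derivative of the coordinate difference
  have hderiv : ∀ s ∈ Set.uIcc (0:ℝ) t, HasDerivAt f (g s) s := by
    intro s hs
    rw [Set.uIcc_of_le ht] at hs
    have hs0 : (0:ℝ) ≤ s := hs.1
    have hd : ∀ l : ι, HasDerivAt (fun r => x l r k) (v l s k) s := by
      intro l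
      exact (EuclideanSpace.proj k).hasFDerivAt.comp_hasDerivAt s (hx l s hs0)
    exact (hd i).sub (hd j)
  -- g is a.e. strongly measurable on Ioc 0 t
  have hgm : AEStronglyMeasurable g (volume.restrict (Set.Ioc (0:ℝ) t)) := by
    have hmeas : ∀ l : ι, Measurable (fun s => deriv (x l) s k) := by
      intro l
      exact ((EuclideanSpace.proj k).continuous.measurable).comp (measurable_deriv (x l))
    have heq : ∀ s ∈ Set.Ioc (0:ℝ) t,
        (fun s => deriv (x i) s k - deriv (x j) s k) s = g s := by
      intro s hs
      have h1 : deriv (x i) s = v i s := (hx i s hs.1.le).deriv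
      have h2 : deriv (x j) s = v j s := (hx j s hs.1.le).deriv
      simp [hg, h1, h2]
    refine (((hmeas i).sub (hmeas j)).aestronglyMeasurable).congr ?_
    refine (ae_restrict_iff' measurableSet_Ioc).2 (Filter.Eventually.of_forall ?_)
    intro s hs
    exact heq s hs
  have hDVIoc : IntegrableOn DV (Set.Ioc (0:ℝ) t) :=
    hDVint.mono_set Set.Ioc_subset_Ioi_self
  have hgint : IntervalIntegrable g volume 0 t := by
    rw [intervalIntegrable_iff_integrableOn_Ioc_of_le ht]
    refine hDVIoc.mono' hgm ?_
    exact Filter.Eventually.of_forall fun s => by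
      simpa [Real.norm_eq_abs] using hbound s
  have hftc : ∫ s in (0:ℝ)..t, g s = f t - f 0 :=
    intervalIntegral.integral_eq_sub_of_hasDerivAt hderiv hgint
  have hDVii : IntervalIntegrable DV volume 0 t := by
    rw [intervalIntegrable_iff_integrableOn_Ioc_of_le ht]
    exact hDVIoc
  have hnorm : |f t - f 0| ≤ ∫ s in (0:ℝ)..t, DV s := by
    rw [← hftc]
    have h1 := intervalIntegral.norm_integral_le_of_norm_le (μ := volume) (f := g)
      (a := 0) (b := t)
      ht (Filter.Eventually.of_forall fun s _ => by simpa [Real.norm_eq_abs] using hbound s)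
      hDVii
    have h2 : (0:ℝ) ≤ ∫ s in (0:ℝ)..t, DV s :=
      intervalIntegral.integral_nonneg ht fun s _ => hDV0 s
    rw [Real.norm_eq_abs] at h1
    exact h1
  have hintle : ∫ s in (0:ℝ)..t, DV s ≤ ∫ s in Set.Ioi (0:ℝ), DV s := by
    rw [intervalIntegral.integral_of_le ht]
    apply setIntegral_mono_set hDVint
    · exact Filter.Eventually.of_forall fun s => hDV0 s
    · exact Filter.Eventually.of_forall Set.Ioc_subset_Ioi_self
  have hm0 : m ≤ |f 0| := by
    rw [hm]
    have h := Finset.inf'_le (f := fun p : ι × ι => |x p.1 0 k - x p.2 0 k|)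
      (show (i, j) ∈ Finset.univ.filter (fun p : ι × ι => p.1 ≠ p.2) by simp [hij])
    simpa using h
  have habs : m - M ≤ |f t| := by
    have h1 : |f 0| - |f t| ≤ |f 0 - f t| := abs_sub_abs_le_abs_sub (f 0) (f t)
    have h2 : |f 0 - f t| = |f t - f 0| := abs_sub_comm _ _
    linarith
  calc m - M ≤ |f t| := habs
    _ = |(x i t - x j t) k| := by simp [hf, PiLp.sub_apply]
    _ ≤ ‖x i t - x j t‖ := coord_abs_le_norm _ _
end
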